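/- Assume some X₀ ∈ Λ satisfies T ⊆ X₀. Then the following are equivalent: (1) F is convex; (2) C_{R|T,Λ} is convex (as a subset of the product space of families of matrices); (3) S_{R|T} is convex; (4) the cone 𝒞_{R|T} is convex. -/

import Mathlib

open scoped ComplexOrder ENNReal Kronecker Matrix

namespace RMP

variable {ι : Type} [Fintype ι] [DecidableEq ι]
variable (d : ι → Type) [∀ i, Fintype (d i)] [∀ i, DecidableEq (d i)] [∀ i, Nonempty (d i)]

/-- The space of matrices on the global system. -/
abbrev GlobalMat : Type := Matrix (∀ i, d i) (∀ i, d i) ℂ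

/-- The space of matrices on the subsystem `X`. -/
abbrev SubMat (X : Finset ι) : Type :=
  Matrix (∀ i : X, d i.1) (∀ i : X, d i.1) ℂ

/-- A quantum state: positive semidefinite with unit trace. -/
def IsState {m : Type} [Fintype m] (ρ : Matrix m m ℂ) : Prop :=
  ρ.PosSemidef ∧ ρ.trace = 1

/-- Combine an assignment on `X` with an assignment on its complement. -/
def combine (X : Finset ι) (a : ∀ i : X, d i.1) (c : ∀ i : (Xᶜ : Finset ι), d i.1) :
    ∀ i, d i := fun i =>
  if h : i ∈ X then a ⟨i, h⟩ else c ⟨i, Finset.mem_compl.mpr h⟩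

/-- Partial trace onto subsystem `X`. -/
noncomputable def ptrace (X : Finset ι) (ρ : GlobalMat d) : SubMat d X :=
  Matrix.of fun a b =>
    ∑ c : ∀ i : (Xᶜ : Finset ι), d i.1, ρ (combine d X a c) (combine d X b c)

variable (Λ : Finset (Finset ι)) (T : Finset ι) (F : Set (SubMat d T))

/-- The set `C_{R|T,Λ}` of `R`-free compatible families of marginals. -/
def CRT : Set (∀ X : Λ, SubMat d X.1) :=
  {σ | ∃ ρ : GlobalMat d, IsState ρ ∧ (∀ X : Λ, ptrace d X.1 ρ = σ X) ∧ ptrace d T ρ ∈ F}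

/-- The cone `𝒞_{R|T}`. -/
def coneRT : Set (GlobalMat d) :=
  {V | ∃ α : ℝ, 0 ≤ α ∧ ∃ η : GlobalMat d, IsState η ∧ ptrace d T η ∈ F ∧ V = α • η}

/-- A proper cone of global matrices. -/
def IsProperCone (C : Set (GlobalMat d)) : Prop :=
  C.Nonempty ∧ Convex ℝ C ∧ IsClosed C ∧
    (∀ (α : ℝ) (V : GlobalMat d), 0 ≤ α → V ∈ C → α • V ∈ C) ∧
    (∀ V : GlobalMat d, V ∈ C → -V ∈ C → V = 0)

/-- The primal value `t(σ_Λ)`. -/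
noncomputable def primal (σ : ∀ X : Λ, SubMat d X.1) : ℝ≥0∞ :=
  sInf {t | ∃ V ∈ coneRT d T F,
    (∀ X : Λ, (ptrace d X.1 V - σ X).PosSemidef) ∧ t = ENNReal.ofReal V.trace.re}

/-- The dual value `s(σ_Λ)`. -/
noncomputable def dual (σ : ∀ X : Λ, SubMat d X.1) : ℝ≥0∞ :=
  sSup {s | ∃ Y : ∀ X : Λ, SubMat d X.1,
    (∀ X : Λ, (Y X).PosSemidef) ∧
    (∀ τ ∈ CRT d Λ T F, (∑ X : Λ, (τ X * Y X).trace.re) ≤ 1) ∧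
    s = ENNReal.ofReal (∑ X : Λ, (σ X * Y X).trace.re)}

end RMP

namespace RMP

/-- The set `S_{R|T}` of global states whose marginal on `T` is free. -/
def SRT {ι : Type} [Fintype ι] [DecidableEq ι]
    (d : ι → Type) [∀ i, Fintype (d i)] [∀ i, DecidableEq (d i)]
    (T : Finset ι) (F : Set (SubMat d T)) : Set (GlobalMat d) :=
  {ρ | IsState ρ ∧ ptrace d T ρ ∈ F}

section Aux

set_option linter.unusedSectionVars false
set_option linter.unusedVariables false

variable {ι : Type} [Fintype ι] [DecidableEq ι]
variable (d : ι → Type) [∀ i, Fintype (d i)] [∀ i, DecidableEq (d i)] [∀ i, Nonempty (d i)]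

lemma psd_real_smul {n : Type} [Fintype n] {M : Matrix n n ℂ}
    (h : M.PosSemidef) {a : ℝ} (ha : 0 ≤ a) : (a • M).PosSemidef := by
  refine ⟨?_, fun x => ?_⟩
  · unfold Matrix.IsHermitian
    rw [Matrix.conjTranspose_smul, star_trivial, h.1.eq]
  · exact (h.smul ha).2 x

lemma ptrace_add (X : Finset ι) (ρ ρ' : GlobalMat d) :
    ptrace d X (ρ + ρ') = ptrace d X ρ + ptrace d X ρ' := by
  ext a b
  simp [ptrace, Finset.sum_add_distrib]

lemma ptrace_smul (X : Finset ι) (a : ℝ) (ρ : GlobalMat d) :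
    ptrace d X (a • ρ) = a • ptrace d X ρ := by
  ext a b
  simp [ptrace, Finset.smul_sum]

lemma ptrace_lin (X : Finset ι) (ρ ρ' : GlobalMat d) (a b : ℝ) :
    ptrace d X (a • ρ + b • ρ') = a • ptrace d X ρ + b • ptrace d X ρ' := by
  rw [ptrace_add, ptrace_smul, ptrace_smul]

/-- The splitting equivalence between global assignments and pairs. -/
def splitEquiv (T : Finset ι) :
    (∀ i, d i) ≃ (∀ i : T, d i.1) × (∀ i : (Tᶜ : Finset ι), d i.1) where
  toFun x := (fun i => x i.1, fun i => x i.1)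
  invFun p := combine d T p.1 p.2
  left_inv x := by
    funext i
    by_cases h : i ∈ T <;> simp [combine, h]
  right_inv p := by
    refine Prod.ext ?_ ?_
    · funext i
      simp [combine, i.2]
    · funext i
      have : i.1 ∉ T := Finset.mem_compl.mp i.2
      simp [combine, this]

variable {d} in
lemma combine_fst (T : Finset ι) (a : ∀ i : T, d i.1) (c : ∀ i : (Tᶜ : Finset ι), d i.1) :
    (fun i : T => combine d T a c i.1) = a := by
  funext i
  simp [combine, i.2]

variable {d} in
lemma combine_snd (T : Finset ι) (a : ∀ i : T, d i.1) (c : ∀ i : (Tᶜ : Finset ι), d i.1) :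
    (fun i : (Tᶜ : Finset ι) => combine d T a c i.1) = c := by
  funext i
  have : i.1 ∉ T := Finset.mem_compl.mp i.2
  simp [combine, this]

/-- Extend a state on `T` to a global state, tensoring with a point mass at `c₀`. -/
noncomputable def extend (T : Finset ι) (c₀ : ∀ i : (Tᶜ : Finset ι), d i.1)
    (η : SubMat d T) : GlobalMat d :=
  Matrix.of fun x y =>
    (if (fun i : (Tᶜ : Finset ι) => x i.1) = c₀ then 1 else 0) *
    (if (fun i : (Tᶜ : Finset ι) => y i.1) = c₀ then 1 else 0) *
    η (fun i : T => x i.1) (fun i : T => y i.1)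

lemma extend_posSemidef (T : Finset ι) (c₀ : ∀ i : (Tᶜ : Finset ι), d i.1)
    {η : SubMat d T} (hη : η.PosSemidef) : (extend d T c₀ η).PosSemidef := by
  open scoped MatrixOrder in
  obtain ⟨B, rfl⟩ := CStarAlgebra.nonneg_iff_eq_star_mul_self.mp hη.nonneg
  rw [Matrix.star_eq_conjTranspose]
  set C : Matrix (∀ i : T, d i.1) (∀ i, d i) ℂ :=
    Matrix.of fun k x =>
      B k (fun i : T => x i.1) * (if (fun i : (Tᶜ : Finset ι) => x i.1) = c₀ then 1 else 0)
  have : extend d T c₀ (Bᴴ * B) = Cᴴ * C := by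
    ext x y
    simp only [extend, Matrix.of_apply, Matrix.mul_apply, Matrix.conjTranspose_apply, C,
      Matrix.of_apply, star_mul']
    rw [Finset.mul_sum]
    refine Finset.sum_congr rfl fun k _ => ?_
    have hs : star (if (fun i : (Tᶜ : Finset ι) => x i.1) = c₀ then (1:ℂ) else 0)
        = (if (fun i : (Tᶜ : Finset ι) => x i.1) = c₀ then (1:ℂ) else 0) := by
      split <;> simp
    rw [hs]
    ring
  rw [this]
  exact Matrix.posSemidef_conjTranspose_mul_self C

lemma extend_trace (T : Finset ι) (c₀ : ∀ i : (Tᶜ : Finset ι), d i.1)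
    (η : SubMat d T) : (extend d T c₀ η).trace = η.trace := by
  unfold Matrix.trace Matrix.diag
  rw [← Equiv.sum_comp (splitEquiv d T).symm
    (fun x => extend d T c₀ η x x), Fintype.sum_prod_type]
  simp only [splitEquiv, Equiv.coe_fn_symm_mk, extend, Matrix.of_apply,
    combine_fst, combine_snd]
  simp [Finset.sum_ite_eq', mul_comm]

lemma extend_ptrace (T : Finset ι) (c₀ : ∀ i : (Tᶜ : Finset ι), d i.1)
    (η : SubMat d T) : ptrace d T (extend d T c₀ η) = η := by
  ext a b
  simp only [ptrace, Matrix.of_apply, extend, combine_fst, combine_snd]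
  simp [Finset.sum_ite_eq']

/-- Split the complement of `T` along a superset `X₀ ⊇ T`. -/
def subEquiv (T X₀ : Finset ι) (hTX : T ⊆ X₀) :
    (∀ i : (Tᶜ : Finset ι), d i.1) ≃
      (∀ i : ((X₀ \ T : Finset ι)), d i.1) × (∀ i : ((X₀ᶜ : Finset ι)), d i.1) where
  toFun c := (fun i => c ⟨i.1, Finset.mem_compl.mpr (Finset.mem_sdiff.mp i.2).2⟩,
              fun i => c ⟨i.1, Finset.mem_compl.mpr (fun h => Finset.mem_compl.mp i.2 (hTX h))⟩)
  invFun p := fun i =>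
    if h : i.1 ∈ X₀ then p.1 ⟨i.1, Finset.mem_sdiff.mpr ⟨h, Finset.mem_compl.mp i.2⟩⟩
    else p.2 ⟨i.1, Finset.mem_compl.mpr h⟩
  left_inv c := by
    funext i
    by_cases h : i.1 ∈ X₀ <;> simp [h]
  right_inv p := by
    refine Prod.ext ?_ ?_
    · funext i
      simp [(Finset.mem_sdiff.mp i.2).1]
    · funext i
      simp [Finset.mem_compl.mp i.2]

/-- Merge an assignment on `T` with one on `X₀ \ T` to an assignment on `X₀`. -/
def merge (T X₀ : Finset ι) (hTX : T ⊆ X₀) (a : ∀ i : T, d i.1)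
    (e : ∀ i : ((X₀ \ T : Finset ι)), d i.1) : ∀ i : X₀, d i.1 := fun i =>
  if h : i.1 ∈ T then a ⟨i.1, h⟩ else e ⟨i.1, Finset.mem_sdiff.mpr ⟨i.2, h⟩⟩

lemma combine_merge (T X₀ : Finset ι) (hTX : T ⊆ X₀) (a : ∀ i : T, d i.1)
    (e : ∀ i : ((X₀ \ T : Finset ι)), d i.1) (f : ∀ i : ((X₀ᶜ : Finset ι)), d i.1) :
    combine d T a ((subEquiv d T X₀ hTX).symm (e, f)) =
      combine d X₀ (merge d T X₀ hTX a e) f := by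
  funext i
  by_cases hX : i ∈ X₀
  · by_cases hT : i ∈ T
    · simp [combine, merge, hT, hX]
    · simp [combine, merge, subEquiv, hT, hX]
  · have hT : i ∉ T := fun h => hX (hTX h)
    simp [combine, merge, subEquiv, hT, hX]

lemma ptrace_ptrace (T X₀ : Finset ι) (hTX : T ⊆ X₀) (ρ : GlobalMat d)
    (a b : ∀ i : T, d i.1) :
    ptrace d T ρ a b = ∑ e : ∀ i : ((X₀ \ T : Finset ι)), d i.1,
      ptrace d X₀ ρ (merge d T X₀ hTX a e) (merge d T X₀ hTX b e) := by
  simp only [ptrace, Matrix.of_apply]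
  rw [← Equiv.sum_comp (subEquiv d T X₀ hTX).symm
    (fun c => ρ (combine d T a c) (combine d T b c)), Fintype.sum_prod_type]
  exact Finset.sum_congr rfl fun e _ => Finset.sum_congr rfl fun f _ => by
    rw [combine_merge, combine_merge]

lemma ptrace_eq_of_ptrace_eq {T X₀ : Finset ι} (hTX : T ⊆ X₀) {ρ ρ' : GlobalMat d}
    (h : ptrace d X₀ ρ = ptrace d X₀ ρ') : ptrace d T ρ = ptrace d T ρ' := by
  ext a b
  rw [ptrace_ptrace d T X₀ hTX ρ a b, ptrace_ptrace d T X₀ hTX ρ' a b, h]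

end Aux

/-- Lemma 1 of the paper. Assuming the target `T` is contained in
some `X₀ ∈ Λ`, the following are equivalent: `F` is convex; `C_{R|T,Λ}` is convex;
`S_{R|T}` is convex; the cone `𝒞_{R|T}` is convex. -/
theorem convexity_tfae
    {ι : Type} [Fintype ι] [DecidableEq ι]
    (d : ι → Type) [∀ i, Fintype (d i)] [∀ i, DecidableEq (d i)] [∀ i, Nonempty (d i)]
    (Λ : Finset (Finset ι)) (T : Finset ι) (F : Set (SubMat d T))
    (hF : ∀ η ∈ F, IsState η)
    (hT : ∃ X₀ ∈ Λ, T ⊆ X₀) :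
    List.TFAE [Convex ℝ F, Convex ℝ (CRT d Λ T F), Convex ℝ (SRT d T F),
      Convex ℝ (coneRT d T F)] := by
  classical
  obtain ⟨X₀, hX₀Λ, hTX₀⟩ := hT
  obtain ⟨c₀⟩ : Nonempty (∀ i : (Tᶜ : Finset ι), d i.1) := inferInstance
  have hstate : ∀ {ρ ρ' : GlobalMat d}, IsState ρ → IsState ρ' → ∀ {a b : ℝ},
      0 ≤ a → 0 ≤ b → a + b = 1 → IsState (a • ρ + b • ρ') := by
    intro ρ ρ' hρ hρ' a b ha hb hab
    refine ⟨(psd_real_smul hρ.1 ha).add (psd_real_smul hρ'.1 hb), ?_⟩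
    rw [Matrix.trace_add, Matrix.trace_smul, Matrix.trace_smul, hρ.2, hρ'.2,
      Complex.real_smul, Complex.real_smul, mul_one, mul_one, ← Complex.ofReal_add, hab,
      Complex.ofReal_one]
  have hExtState : ∀ {η : SubMat d T}, η ∈ F → IsState (extend d T c₀ η) := by
    intro η hη
    exact ⟨extend_posSemidef d T c₀ (hF η hη).1, by rw [extend_trace]; exact (hF η hη).2⟩
  tfae_have 1 → 2 := by
    intro h1 σ hσ σ' hσ' a b ha hb hab
    obtain ⟨ρ, hρ, hρm, hρF⟩ := hσ
    obtain ⟨ρ', hρ', hρ'm, hρ'F⟩ := hσ'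
    refine ⟨a • ρ + b • ρ', hstate hρ hρ' ha hb hab, fun X => ?_, ?_⟩
    · rw [ptrace_lin, hρm X, hρ'm X]
      rfl
    · rw [ptrace_lin]
      exact h1 hρF hρ'F ha hb hab
  tfae_have 2 → 1 := by
    intro h2 η hηF η' hη'F a b ha hb hab
    have hmemσ : (fun X : Λ => ptrace d X.1 (extend d T c₀ η)) ∈ CRT d Λ T F :=
      ⟨extend d T c₀ η, hExtState hηF, fun X => rfl, by rw [extend_ptrace]; exact hηF⟩
    have hmemσ' : (fun X : Λ => ptrace d X.1 (extend d T c₀ η')) ∈ CRT d Λ T F :=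
      ⟨extend d T c₀ η', hExtState hη'F, fun X => rfl, by rw [extend_ptrace]; exact hη'F⟩
    obtain ⟨ρ₂, hρ₂, hmarg, hFmem⟩ := h2 hmemσ hmemσ' ha hb hab
    have hX : ptrace d X₀ ρ₂ =
        ptrace d X₀ (a • extend d T c₀ η + b • extend d T c₀ η') := by
      rw [ptrace_lin]
      exact hmarg ⟨X₀, hX₀Λ⟩
    have hT2 : ptrace d T ρ₂ = a • η + b • η' := by
      rw [ptrace_eq_of_ptrace_eq d hTX₀ hX, ptrace_lin, extend_ptrace, extend_ptrace]
    rwa [hT2] at hFmem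
  tfae_have 1 → 3 := by
    intro h1 ρ hρ ρ' hρ' a b ha hb hab
    exact ⟨hstate hρ.1 hρ'.1 ha hb hab,
      by rw [ptrace_lin]; exact h1 hρ.2 hρ'.2 ha hb hab⟩
  tfae_have 3 → 4 := by
    intro h3 V hV V' hV' a b ha hb hab
    obtain ⟨α, hα, η, hη, hηF, rfl⟩ := hV
    obtain ⟨β, hβ, η', hη', hη'F, rfl⟩ := hV'
    by_cases hγ : a * α + b * β = 0
    · have h1 : a * α = 0 := by nlinarith [mul_nonneg ha hα, mul_nonneg hb hβ]
      have h2 : b * β = 0 := by nlinarith [mul_nonneg ha hα, mul_nonneg hb hβ]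
      refine ⟨0, le_refl 0, η, hη, hηF, ?_⟩
      rw [smul_smul, smul_smul, h1, h2]
      simp
    · set γ := a * α + b * β with hγdef
      have hγpos : 0 < γ := lt_of_le_of_ne (by positivity) (Ne.symm hγ)
      have hsum : a * α / γ + b * β / γ = 1 := by
        rw [← add_div, div_self hγ]
      obtain ⟨hst, hptF⟩ := h3 (⟨hη, hηF⟩ : η ∈ SRT d T F) (⟨hη', hη'F⟩ : η' ∈ SRT d T F)
        (div_nonneg (mul_nonneg ha hα) hγpos.le)
        (div_nonneg (mul_nonneg hb hβ) hγpos.le) hsum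
      refine ⟨γ, hγpos.le, _, hst, hptF, ?_⟩
      rw [smul_add, smul_smul, smul_smul, smul_smul, smul_smul,
        mul_div_assoc' γ (a * α) γ, mul_comm γ (a * α), mul_div_assoc, div_self hγ, mul_one,
        mul_div_assoc' γ (b * β) γ, mul_comm γ (b * β), mul_div_assoc, div_self hγ, mul_one]
  tfae_have 4 → 1 := by
    intro h4 η hηF η' hη'F a b ha hb hab
    have hρ := hExtState hηF
    have hρ' := hExtState hη'F
    have hmem : extend d T c₀ η ∈ coneRT d T F :=
      ⟨1, zero_le_one, extend d T c₀ η, hρ, by rw [extend_ptrace]; exact hηF,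
        (one_smul ℝ _).symm⟩
    have hmem' : extend d T c₀ η' ∈ coneRT d T F :=
      ⟨1, zero_le_one, extend d T c₀ η', hρ', by rw [extend_ptrace]; exact hη'F,
        (one_smul ℝ _).symm⟩
    obtain ⟨α, hα, θ, hθ, hθF, heq⟩ := h4 hmem hmem' ha hb hab
    have h1 : (a • extend d T c₀ η + b • extend d T c₀ η' : GlobalMat d).trace = 1 :=
      (hstate hρ hρ' ha hb hab).2
    rw [heq, Matrix.trace_smul, hθ.2, Complex.real_smul, mul_one] at h1
    have hα1 : α = 1 := by exact_mod_cast h1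
    rw [hα1, one_smul] at heq
    have hT2 : ptrace d T θ = a • η + b • η' := by
      rw [← heq, ptrace_lin, extend_ptrace, extend_ptrace]
    rwa [hT2] at hθF
  tfae_finish

end RMP
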